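/- arXiv:cs/0204002 — 4 statements merged into one kernel-verified Lean document; each statement's English description precedes it below -/
import Mathlib

section
/- If a token-moving puzzle with the 2-adjacency restriction is solvable (configuration A can be re-arranged into configuration B), then adding one additional unlabeled token to A (at any unoccupied position) yields a puzzle in which some configuration containing B (i.e., B plus the extra token somewhere) is still reachable. -/
/-- A valid 2-adjacent move on board `G`: take a token at `q ∈ C`, place it at an
unoccupied `p` adjacent to at least 2 tokens of `C` other than `q`. -/
def ValidMove {P : Type*} [DecidableEq P] (G : SimpleGraph P) (C C' : Finset P) : Prop :=
  ∃ q ∈ C, ∃ p, p ∉ C ∧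
    (∃ a ∈ C.erase q, ∃ b ∈ C.erase q, a ≠ b ∧ G.Adj p a ∧ G.Adj p b) ∧
    C' = insert p (C.erase q)

/-- Reachability by a finite sequence of valid 2-adjacent moves. -/
def Reach {P : Type*} [DecidableEq P] (G : SimpleGraph P) : Finset P → Finset P → Prop :=
  Relation.ReflTransGen (ValidMove G)

lemma extra_token_step {P : Type*} [DecidableEq P] (G : SimpleGraph P)
    {C C' : Finset P} (h : ValidMove G C C') {x : P} (hx : x ∉ C) :
    ∃ y ∉ C', Reach G (insert x C) (insert y C') := by
  obtain ⟨q, hq, p, hp, ⟨a, ha, b, hb, hab, hpa, hpb⟩, rfl⟩ := h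
  by_cases hxp : x = p
  · subst hxp
    refine ⟨q, ?_, ?_⟩
    · simp only [Finset.mem_insert, Finset.mem_erase]
      rintro (rfl | ⟨h1, _⟩)
      · exact hp hq
      · exact h1 rfl
    · have : insert x C = insert q (insert x (C.erase q)) := by
        rw [Finset.insert_comm, Finset.insert_erase hq]
      rw [this]
      exact Relation.ReflTransGen.refl
  · have hxq : x ≠ q := fun h => hx (h ▸ hq)
    refine ⟨x, ?_, ?_⟩
    · simp only [Finset.mem_insert, Finset.mem_erase]
      rintro (rfl | ⟨_, h2⟩)
      · exact hxp rfl
      · exact hx h2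
    · refine Relation.ReflTransGen.single ?_
      refine ⟨q, Finset.mem_insert_of_mem hq, p, ?_, ⟨a, ?_, b, ?_, hab, hpa, hpb⟩, ?_⟩
      · simp only [Finset.mem_insert]
        rintro (rfl | h2)
        · exact hxp rfl
        · exact hp h2
      · rw [Finset.erase_insert_of_ne hxq]
        exact Finset.mem_insert_of_mem ha
      · rw [Finset.erase_insert_of_ne hxq]
        exact Finset.mem_insert_of_mem hb
      · rw [Finset.erase_insert_of_ne hxq, Finset.insert_comm]

/-- Adding one additional unlabeled token cannot hurt: if `B` is reachable from `A`,
then from `A` plus an extra token at any unoccupied position `e`, some configuration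
consisting of `B` plus the extra token somewhere is still reachable. -/
theorem extra_token_emulation {P : Type*} [DecidableEq P] (G : SimpleGraph P)
    (A B : Finset P) (h : Reach G A B) (e : P) (he : e ∉ A) :
    ∃ e', e' ∉ B ∧ Reach G (insert e A) (insert e' B) := by
  induction h with
  | refl => exact ⟨e, he, Relation.ReflTransGen.refl⟩
  | tail _ step ih =>
    obtain ⟨e', he', hr⟩ := ih
    obtain ⟨y, hy, hr2⟩ := extra_token_step G step he'
    exact ⟨y, hy, hr.trans hr2⟩
end

section
/- If a configuration C is span-minimal (removal of any token strictly reduces the span), then every valid 2-adjacent move from C strictly reduces the span: for any valid move from C producing C', span(C') ⊊ span(C). -/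
/-- The span of a set of positions: the least superset closed under adding any
vertex adjacent to at least 2 vertices of the set. -/
def Span {P : Type*} (G : SimpleGraph P) (C : Set P) : Set P :=
  ⋂₀ {S : Set P | C ⊆ S ∧ ∀ p, (∃ a ∈ S, ∃ b ∈ S, a ≠ b ∧ G.Adj p a ∧ G.Adj p b) → p ∈ S}



lemma subset_span {P : Type*} (G : SimpleGraph P) (C : Set P) : C ⊆ Span G C := by
  intro x hx S hS; exact hS.1 hx

lemma span_least {P : Type*} (G : SimpleGraph P) {C S : Set P} (h1 : C ⊆ S)
    (h2 : ∀ p, (∃ a ∈ S, ∃ b ∈ S, a ≠ b ∧ G.Adj p a ∧ G.Adj p b) → p ∈ S) :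
    Span G C ⊆ S := Set.sInter_subset_of_mem ⟨h1, h2⟩

lemma span_closed {P : Type*} (G : SimpleGraph P) (C : Set P) :
    ∀ p, (∃ a ∈ Span G C, ∃ b ∈ Span G C, a ≠ b ∧ G.Adj p a ∧ G.Adj p b) → p ∈ Span G C := by
  rintro p ⟨a, ha, b, hb, hab, hpa, hpb⟩ S hS
  exact hS.2 p ⟨a, ha S hS, b, hb S hS, hab, hpa, hpb⟩

lemma span_mono {P : Type*} (G : SimpleGraph P) {C D : Set P} (h : C ⊆ D) :
    Span G C ⊆ Span G D :=
  span_least G (h.trans (subset_span G D)) (span_closed G D)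

/-- If a configuration is span-minimal (removing any token strictly reduces the span),
then every valid move strictly reduces the span. -/
theorem spanMinimal_move_reduces_span {P : Type*} [DecidableEq P] (G : SimpleGraph P)
    (C : Finset P) (hmin : ∀ t ∈ C, Span G (↑C \ {t}) ≠ Span G ↑C)
    (C' : Finset P) (h : ValidMove G C C') : Span G ↑C' ⊂ Span G ↑C := by
  obtain ⟨q, hq, p, hp, ⟨a, ha, b, hb, hab, hpa, hpb⟩, hC'⟩ := h
  have hsub : Span G ↑C' ⊆ Span G (↑C \ {q}) := by
    apply span_least G _ (span_closed G _)
    rw [hC']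
    push_cast
    intro x hx
    rcases hx with hx | hx
    · subst hx
      refine span_closed G _ x ⟨a, subset_span G _ ?_, b, subset_span G _ ?_, hab, hpa, hpb⟩
      · simpa using (Finset.mem_erase.mp ha).symm
      · simpa using (Finset.mem_erase.mp hb).symm
    · exact subset_span G _ hx
  have hle : Span G (↑C \ {q}) ⊆ Span G ↑C := span_mono G Set.diff_subset
  exact hsub.trans_ssubset (hle.ssubset_of_ne (hmin q hq))
end

section
/- On the equilateral-triangle grid, if a configuration C contains three mutually adjacent coins (a triangle), then span(C) is the entire (infinite) vertex set of the grid. -/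
/-- The triangular grid on ℤ²: `(x,y)` is adjacent to `(x±1,y)`, `(x,y±1)`,
`(x+1,y−1)`, `(x−1,y+1)`; equivalently `a² + ab + b² = 1` for the difference `(a,b)`. -/
def TriGrid : SimpleGraph (ℤ × ℤ) where
  Adj p q := (p.1 - q.1)^2 + (p.1 - q.1) * (p.2 - q.2) + (p.2 - q.2)^2 = 1
  symm := ⟨by intro p q h; linear_combination h⟩
  loopless := ⟨by intro p; simp⟩

lemma unit_cases (u v : ℤ) (h : u^2 + u*v + v^2 = 1) :
    (u = 1 ∧ v = 0) ∨ (u = 0 ∧ v = 1) ∨ (u = -1 ∧ v = 1) ∨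
    (u = -1 ∧ v = 0) ∨ (u = 0 ∧ v = -1) ∨ (u = 1 ∧ v = -1) := by
  have h1 : -1 ≤ u := by nlinarith [sq_nonneg (u+v), sq_nonneg v, sq_nonneg (u+1)]
  have h2 : u ≤ 1 := by nlinarith [sq_nonneg (u+v), sq_nonneg v, sq_nonneg (u-1)]
  have h3 : -1 ≤ v := by nlinarith [sq_nonneg (u+v), sq_nonneg u, sq_nonneg (v+1)]
  have h4 : v ≤ 1 := by nlinarith [sq_nonneg (u+v), sq_nonneg u, sq_nonneg (v-1)]
  interval_cases u <;> interval_cases v <;> simp_all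

lemma triAdj {p q : ℤ × ℤ}
    (h : (p.1 - q.1)^2 + (p.1 - q.1) * (p.2 - q.2) + (p.2 - q.2)^2 = 1) :
    TriGrid.Adj p q := h

def UpT (S : Set (ℤ × ℤ)) (x y : ℤ) : Prop :=
  (x, y) ∈ S ∧ (x + 1, y) ∈ S ∧ (x, y + 1) ∈ S

lemma UpT_congr {S : Set (ℤ × ℤ)} {x y x' y' : ℤ} (h : UpT S x y)
    (hx : x = x') (hy : y = y') : UpT S x' y' := by subst hx; subst hy; exact h

/-- On the triangular grid, a configuration containing a triangle (three mutually
adjacent coins) has span equal to the entire grid. -/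
theorem tri_span_univ (C : Finset (ℤ × ℤ)) (a b c : ℤ × ℤ)
    (ha : a ∈ C) (hb : b ∈ C) (hc : c ∈ C)
    (hab : TriGrid.Adj a b) (hbc : TriGrid.Adj b c) (hac : TriGrid.Adj a c) :
    Span TriGrid ↑C = Set.univ := by
  apply Set.eq_univ_of_forall
  intro p
  rw [Span, Set.mem_sInter]
  rintro S ⟨hCS, hcl⟩
  have add : ∀ (p u v : ℤ × ℤ), u ∈ S → v ∈ S → u ≠ v →
      TriGrid.Adj p u → TriGrid.Adj p v → p ∈ S :=
    fun p u v hu hv hne h1 h2 => hcl p ⟨u, hu, v, hv, hne, h1, h2⟩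
  have cv : ∀ (q : ℤ × ℤ) (x y : ℤ), q ∈ S → q.1 = x → q.2 = y → (x, y) ∈ S := by
    intro q x y h h1 h2; subst h1; subst h2; simpa using h
  have memC : ∀ (x y x' y' : ℤ), (x, y) ∈ S → x = x' → y = y' → (x', y') ∈ S := by
    rintro x y x' y' h rfl rfl; exact h
  have neC : ∀ x1 y1 x2 y2 : ℤ, x1 ≠ x2 → ((x1, y1) : ℤ × ℤ) ≠ (x2, y2) := by
    intro x1 y1 x2 y2 h hE; rw [Prod.mk.injEq] at hE; omega
  have neC2 : ∀ x1 y1 x2 y2 : ℤ, y1 ≠ y2 → ((x1, y1) : ℤ × ℤ) ≠ (x2, y2) := by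
    intro x1 y1 x2 y2 h hE; rw [Prod.mk.injEq] at hE; omega
  -- fills the bottom-left corner of a down triangle given top and bottom-right
  have addPoint : ∀ x y : ℤ, (x, y + 1) ∈ S → (x + 1, y) ∈ S → (x, y) ∈ S := by
    intro x y h1 h2
    exact add (x, y) (x, y + 1) (x + 1, y) h1 h2 (neC _ _ _ _ (by omega))
      (triAdj (by dsimp only; ring)) (triAdj (by dsimp only; ring))
  -- step lemmas
  have stepR : ∀ x y, UpT S x y → UpT S (x + 1) y := by
    rintro x y ⟨h1, h2, h3⟩
    have hA : ((x + 1, y + 1) : ℤ × ℤ) ∈ S :=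
      add _ (x + 1, y) (x, y + 1) h2 h3 (neC _ _ _ _ (by omega))
        (triAdj (by dsimp only; ring)) (triAdj (by dsimp only; ring))
    have hB : ((x + 1 + 1, y) : ℤ × ℤ) ∈ S :=
      add _ (x + 1, y) (x + 1, y + 1) h2 hA (neC2 _ _ _ _ (by omega))
        (triAdj (by dsimp only; ring)) (triAdj (by dsimp only; ring))
    exact ⟨h2, hB, hA⟩
  have stepU : ∀ x y, UpT S x y → UpT S x (y + 1) := by
    rintro x y ⟨h1, h2, h3⟩
    have hA : ((x + 1, y + 1) : ℤ × ℤ) ∈ S :=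
      add _ (x + 1, y) (x, y + 1) h2 h3 (neC _ _ _ _ (by omega))
        (triAdj (by dsimp only; ring)) (triAdj (by dsimp only; ring))
    have hC : ((x, y + 1 + 1) : ℤ × ℤ) ∈ S :=
      add _ (x, y + 1) (x + 1, y + 1) h3 hA (neC _ _ _ _ (by omega))
        (triAdj (by dsimp only; ring)) (triAdj (by dsimp only; ring))
    exact ⟨h3, hA, hC⟩
  have stepL : ∀ x y, UpT S x y → UpT S (x - 1) y := by
    rintro x y ⟨h1, h2, h3⟩
    have hD : ((x - 1, y + 1) : ℤ × ℤ) ∈ S :=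
      add _ (x, y) (x, y + 1) h1 h3 (neC2 _ _ _ _ (by omega))
        (triAdj (by dsimp only; ring)) (triAdj (by dsimp only; ring))
    have hE : ((x - 1, y) : ℤ × ℤ) ∈ S :=
      add _ (x, y) (x - 1, y + 1) h1 hD (neC _ _ _ _ (by omega))
        (triAdj (by dsimp only; ring)) (triAdj (by dsimp only; ring))
    exact ⟨hE, memC x y _ _ h1 (by ring) rfl, hD⟩
  have stepD : ∀ x y, UpT S x y → UpT S x (y - 1) := by
    rintro x y ⟨h1, h2, h3⟩
    have hF : ((x + 1, y - 1) : ℤ × ℤ) ∈ S :=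
      add _ (x, y) (x + 1, y) h1 h2 (neC _ _ _ _ (by omega))
        (triAdj (by dsimp only; ring)) (triAdj (by dsimp only; ring))
    have hG : ((x, y - 1) : ℤ × ℤ) ∈ S :=
      add _ (x, y) (x + 1, y - 1) h1 hF (neC _ _ _ _ (by omega))
        (triAdj (by dsimp only; ring)) (triAdj (by dsimp only; ring))
    exact ⟨hG, hF, memC x y _ _ h1 rfl (by ring)⟩
  -- base triangle
  have haS : a ∈ S := hCS (Finset.mem_coe.mpr ha)
  have hbS : b ∈ S := hCS (Finset.mem_coe.mpr hb)
  have hcS : c ∈ S := hCS (Finset.mem_coe.mpr hc)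
  have hu := unit_cases (a.1 - b.1) (a.2 - b.2) hab
  have hw := unit_cases (a.1 - c.1) (a.2 - c.2) hac
  have hv := unit_cases (b.1 - c.1) (b.2 - c.2) hbc
  obtain ⟨x0, y0, h0⟩ : ∃ x y, UpT S x y := by
    rcases hu with ⟨hu1, hu2⟩ | ⟨hu1, hu2⟩ | ⟨hu1, hu2⟩ | ⟨hu1, hu2⟩ | ⟨hu1, hu2⟩ | ⟨hu1, hu2⟩ <;>
    rcases hw with ⟨hw1, hw2⟩ | ⟨hw1, hw2⟩ | ⟨hw1, hw2⟩ | ⟨hw1, hw2⟩ | ⟨hw1, hw2⟩ | ⟨hw1, hw2⟩ <;>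
    rcases hv with ⟨hv1, hv2⟩ | ⟨hv1, hv2⟩ | ⟨hv1, hv2⟩ | ⟨hv1, hv2⟩ | ⟨hv1, hv2⟩ | ⟨hv1, hv2⟩ <;>
      first
      | omega
      | exact ⟨a.1, a.2, cv a _ _ haS (by omega) (by omega), cv b _ _ hbS (by omega) (by omega),
          cv c _ _ hcS (by omega) (by omega)⟩
      | exact ⟨a.1, a.2, cv a _ _ haS (by omega) (by omega), cv c _ _ hcS (by omega) (by omega),
          cv b _ _ hbS (by omega) (by omega)⟩
      | exact ⟨b.1, b.2, cv b _ _ hbS (by omega) (by omega), cv a _ _ haS (by omega) (by omega),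
          cv c _ _ hcS (by omega) (by omega)⟩
      | exact ⟨b.1, b.2, cv b _ _ hbS (by omega) (by omega), cv c _ _ hcS (by omega) (by omega),
          cv a _ _ haS (by omega) (by omega)⟩
      | exact ⟨c.1, c.2, cv c _ _ hcS (by omega) (by omega), cv a _ _ haS (by omega) (by omega),
          cv b _ _ hbS (by omega) (by omega)⟩
      | exact ⟨c.1, c.2, cv c _ _ hcS (by omega) (by omega), cv b _ _ hbS (by omega) (by omega),
          cv a _ _ haS (by omega) (by omega)⟩
      | exact ⟨a.1, a.2 - 1,
          addPoint _ _ (cv a _ _ haS (by omega) (by omega)) (cv b _ _ hbS (by omega) (by omega)),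
          cv b _ _ hbS (by omega) (by omega), cv a _ _ haS (by omega) (by omega)⟩
      | exact ⟨a.1, a.2 - 1,
          addPoint _ _ (cv a _ _ haS (by omega) (by omega)) (cv c _ _ hcS (by omega) (by omega)),
          cv c _ _ hcS (by omega) (by omega), cv a _ _ haS (by omega) (by omega)⟩
      | exact ⟨b.1, b.2 - 1,
          addPoint _ _ (cv b _ _ hbS (by omega) (by omega)) (cv a _ _ haS (by omega) (by omega)),
          cv a _ _ haS (by omega) (by omega), cv b _ _ hbS (by omega) (by omega)⟩
      | exact ⟨b.1, b.2 - 1,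
          addPoint _ _ (cv b _ _ hbS (by omega) (by omega)) (cv c _ _ hcS (by omega) (by omega)),
          cv c _ _ hcS (by omega) (by omega), cv b _ _ hbS (by omega) (by omega)⟩
      | exact ⟨c.1, c.2 - 1,
          addPoint _ _ (cv c _ _ hcS (by omega) (by omega)) (cv a _ _ haS (by omega) (by omega)),
          cv a _ _ haS (by omega) (by omega), cv c _ _ hcS (by omega) (by omega)⟩
      | exact ⟨c.1, c.2 - 1,
          addPoint _ _ (cv c _ _ hcS (by omega) (by omega)) (cv b _ _ hbS (by omega) (by omega)),
          cv b _ _ hbS (by omega) (by omega), cv c _ _ hcS (by omega) (by omega)⟩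
  -- spread over the whole grid
  have hrow : ∀ n : ℤ, UpT S (x0 + n) y0 := by
    intro n
    induction n using Int.induction_on with
    | zero => simpa using h0
    | succ k ih => exact UpT_congr (stepR _ _ ih) (by ring) rfl
    | pred k ih => exact UpT_congr (stepL _ _ ih) (by ring) rfl
  have hall : ∀ x y : ℤ, UpT S x y := by
    intro x y
    have hx : UpT S x y0 := UpT_congr (hrow (x - x0)) (by ring) rfl
    have hcol : ∀ n : ℤ, UpT S x (y0 + n) := by
      intro n
      induction n using Int.induction_on with
      | zero => simpa using hx
      | succ k ih => exact UpT_congr (stepU _ _ ih) rfl (by ring)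
      | pred k ih => exact UpT_congr (stepD _ _ ih) rfl (by ring)
    exact UpT_congr (hcol (y - y0)) rfl (by ring)
  have := (hall p.1 p.2).1
  simpa using this
end

section
/- On the triangular grid, if a configuration C has a valid 2-adjacent move, then after at most 2 valid moves one can reach a configuration containing three mutually adjacent coins (a triangle). -/
/-- On the triangular grid, if a configuration has a valid move, then after at most
two valid moves one can reach a configuration containing a triangle. -/
theorem tri_make_triangle (C : Finset (ℤ × ℤ)) (h : ∃ C', ValidMove TriGrid C C') :
    ∃ C' : Finset (ℤ × ℤ),
      (C' = C ∨ ValidMove TriGrid C C' ∨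
        ∃ D, ValidMove TriGrid C D ∧ ValidMove TriGrid D C') ∧
      ∃ a ∈ C', ∃ b ∈ C', ∃ c ∈ C',
        TriGrid.Adj a b ∧ TriGrid.Adj b c ∧ TriGrid.Adj a c := by
  obtain ⟨_, q, hq, p, hp, ⟨a, ha, b, hb, hab, hpa, hpb⟩, -⟩ := h
  set C' : Finset (ℤ × ℤ) := insert p (C.erase q) with hC'
  have move1 : ValidMove TriGrid C C' :=
    ⟨q, hq, p, hp, ⟨a, ha, b, hb, hab, hpa, hpb⟩, rfl⟩
  have haC : a ∈ C := Finset.mem_of_mem_erase ha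
  have hbC : b ∈ C := Finset.mem_of_mem_erase hb
  have hap : a ≠ p := fun h => hp (h ▸ haC)
  have hbp : b ≠ p := fun h => hp (h ▸ hbC)
  have haC' : a ∈ C' := Finset.mem_insert_of_mem ha
  have hbC' : b ∈ C' := Finset.mem_insert_of_mem hb
  have hpC' : p ∈ C' := Finset.mem_insert_self _ _
  set r : ℤ × ℤ := (p.1 - (a.2 - p.2), p.2 + (a.1 - p.1) + (a.2 - p.2)) with hrdef
  have hpa' : (p.1 - a.1)^2 + (p.1 - a.1) * (p.2 - a.2) + (p.2 - a.2)^2 = 1 := hpa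
  have hrp : TriGrid.Adj r p := by
    show (r.1 - p.1)^2 + (r.1 - p.1) * (r.2 - p.2) + (r.2 - p.2)^2 = 1
    simp only [hrdef]
    linear_combination hpa'
  have hra : TriGrid.Adj r a := by
    show (r.1 - a.1)^2 + (r.1 - a.1) * (r.2 - a.2) + (r.2 - a.2)^2 = 1
    simp only [hrdef]
    linear_combination hpa'
  by_cases hr : r ∈ C'
  · exact ⟨C', Or.inr (Or.inl move1), r, hr, p, hpC', a, haC',
      hrp, hpa, hra⟩
  · refine ⟨insert r (C'.erase b), Or.inr (Or.inr ⟨C', move1, ?_⟩), r,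
      Finset.mem_insert_self _ _, p, ?_, a, ?_, hrp, hpa, hra⟩
    · exact ⟨b, hbC', r, hr,
        ⟨p, Finset.mem_erase.2 ⟨hbp.symm, hpC'⟩, a, Finset.mem_erase.2 ⟨hab, haC'⟩,
          (fun h => hap (h.symm)), hrp, hra⟩, rfl⟩
    · exact Finset.mem_insert_of_mem (Finset.mem_erase.2 ⟨hbp.symm, hpC'⟩)
    · exact Finset.mem_insert_of_mem (Finset.mem_erase.2 ⟨hab, haC'⟩)
end
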